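/- For d ≥ 1 define α_d = ∏_{j=2}^{d} (1 − [2(j−1)]/[2j]) and β_d = ∏_{j=1}^{d} (1 − [2j−1]/[2j+1]) in 𝔽_{q²}(t) (empty products equal 1). Then: (i) α_d = [2]^{(q^{2d}−1)/(q²−1)} / ∏_{j=1}^{d} [2j]; (ii) β_d = [1]·[2]^{(q^{2d+1}−q)/(q²−1)} / ∏_{j=0}^{d} [2j+1]; and (iii) for every k ≥ 1 the valuation of [k] at the place t − ζ^q of 𝔽_{q²}(t) (i.e. the order of vanishing at t = ζ^q) equals −q^k. -/

import Mathlib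

open Polynomial in
theorem aux_val {F : Type*} [Field F] (c : F) (p s : F[X]) (n : ℕ)
    (hp : p.eval c ≠ 0) (hsc : s.eval c ≠ 0) :
    algebraMap F[X] (RatFunc F) p / algebraMap F[X] (RatFunc F) ((X - C c) ^ n * s) ≠ 0 ∧
    (((algebraMap F[X] (RatFunc F) p / algebraMap F[X] (RatFunc F) ((X - C c) ^ n * s)).num.rootMultiplicity c : ℤ) -
      ((algebraMap F[X] (RatFunc F) p / algebraMap F[X] (RatFunc F) ((X - C c) ^ n * s)).denom.rootMultiplicity c : ℤ) = -(n : ℤ)) := by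
  set g : F[X] := (X - C c) ^ n * s with hg
  set f := algebraMap F[X] (RatFunc F) p / algebraMap F[X] (RatFunc F) g with hf
  have hp0 : p ≠ 0 := fun h => hp (by simp [h])
  have hs0 : s ≠ 0 := fun h => hsc (by simp [h])
  have hg0 : g ≠ 0 := mul_ne_zero (pow_ne_zero _ (X_sub_C_ne_zero c)) hs0
  have hf0 : f ≠ 0 := div_ne_zero (RatFunc.algebraMap_ne_zero hp0) (RatFunc.algebraMap_ne_zero hg0)
  refine ⟨hf0, ?_⟩
  have hnum0 : f.num ≠ 0 := RatFunc.num_ne_zero hf0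
  have hcross : p * f.denom = g * f.num := by
    have heq : algebraMap F[X] (RatFunc F) p / algebraMap F[X] (RatFunc F) g
        = algebraMap F[X] (RatFunc F) f.num / algebraMap F[X] (RatFunc F) f.denom := by
      rw [RatFunc.num_div_denom]
    rw [div_eq_div_iff (RatFunc.algebraMap_ne_zero hg0)
      (RatFunc.algebraMap_ne_zero f.denom_ne_zero), ← map_mul, ← map_mul] at heq
    rw [mul_comm g f.num]; exact RatFunc.algebraMap_injective F heq
  have hmul : p.rootMultiplicity c + f.denom.rootMultiplicity c
      = (n + s.rootMultiplicity c) + f.num.rootMultiplicity c := by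
    have h1 := rootMultiplicity_mul (x := c) (mul_ne_zero hp0 f.denom_ne_zero)
    have h2 := rootMultiplicity_mul (x := c) (mul_ne_zero hg0 hnum0)
    rw [hcross] at h1
    rw [h2] at h1
    have h3 := rootMultiplicity_mul (x := c)
      (mul_ne_zero (pow_ne_zero n (X_sub_C_ne_zero c)) hs0)
    rw [hg, h3, rootMultiplicity_X_sub_C_pow] at h1
    omega
  rw [rootMultiplicity_eq_zero hp, rootMultiplicity_eq_zero hsc] at hmul
  have hnc : f.num.rootMultiplicity c = 0 := by
    by_contra h
    have hroot : IsRoot f.num c := by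
      by_contra h'
      exact h (rootMultiplicity_eq_zero h')
    have hrootd : IsRoot f.denom c := by
      by_contra h'
      have := rootMultiplicity_eq_zero h'
      omega
    have hdvd1 : (X - C c) ∣ f.num := dvd_iff_isRoot.mpr hroot
    have hdvd2 : (X - C c) ∣ f.denom := dvd_iff_isRoot.mpr hrootd
    exact Polynomial.not_isUnit_X_sub_C c ((RatFunc.isCoprime_num_denom f).isUnit_of_dvd' hdvd1 hdvd2)
  omega

/-- Lemma 3.12: closed formulas for the partial products `α_d` and `β_d`, together
with the valuation `v_{1/T}([k]) = −q^k` at the place `t − ζ^q`. -/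
theorem stmt11 {F : Type*} [Field F] [Fintype F]
    (q : ℕ) (hq : Fintype.card F = q ^ 2) (ζ : F) (hζ : ζ ^ q ≠ ζ) (d : ℕ) (hd : 1 ≤ d) :
    let T : RatFunc F := (RatFunc.X - RatFunc.C ζ ^ q)⁻¹
    let Tσ : RatFunc F := (RatFunc.X - RatFunc.C ζ)⁻¹
    let br : ℕ → RatFunc F := fun k => T ^ q ^ k - if k % 2 = 0 then T else Tσ
    let α : RatFunc F := ∏ j ∈ Finset.Icc 2 d, (1 - br (2 * (j - 1)) / br (2 * j))
    let β : RatFunc F := ∏ j ∈ Finset.Icc 1 d, (1 - br (2 * j - 1) / br (2 * j + 1))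
    α = br 2 ^ ((q ^ (2 * d) - 1) / (q ^ 2 - 1)) / ∏ j ∈ Finset.Icc 1 d, br (2 * j) ∧
      β = br 1 * br 2 ^ ((q ^ (2 * d + 1) - q) / (q ^ 2 - 1)) /
        ∏ j ∈ Finset.Icc 0 d, br (2 * j + 1) ∧
      ∀ k : ℕ, 1 ≤ k →
        ((br k).num.rootMultiplicity (ζ ^ q) : ℤ) -
          ((br k).denom.rootMultiplicity (ζ ^ q) : ℤ) = -(q ^ k : ℤ) := by
  intro T Tσ br α β
  have hq2 : 2 ≤ q := by
    by_contra h
    interval_cases q <;> simp_all <;> omega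
  -- characteristic
  obtain ⟨p, hp⟩ := CharP.exists F
  haveI hpF : CharP F p := hp
  obtain ⟨n, hpprime, hcard⟩ := FiniteField.card F p
  haveI : Fact p.Prime := ⟨hpprime⟩
  haveI : CharP (RatFunc F) p :=
    charP_of_injective_algebraMap (algebraMap F (RatFunc F)).injective p
  obtain ⟨e, -, hqe⟩ : ∃ e, e ≤ (n : ℕ) ∧ q = p ^ e := by
    refine (Nat.dvd_prime_pow hpprime).mp ?_
    rw [← hcard, hq]
    exact dvd_pow_self q (by norm_num)
  -- Frobenius
  have hfrob : ∀ (x y : RatFunc F) (m : ℕ), (x - y) ^ q ^ m = x ^ q ^ m - y ^ q ^ m := by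
    intro x y m
    rw [hqe, ← pow_mul]
    exact sub_pow_char_pow x y (e * m)
  -- T in terms of algebraMap
  have hXC : ∀ u : F, RatFunc.X - RatFunc.C u
      = algebraMap (Polynomial F) (RatFunc F) (Polynomial.X - Polynomial.C u) := by
    intro u
    rw [map_sub, RatFunc.algebraMap_X, RatFunc.algebraMap_C]
  have hT : T = (algebraMap (Polynomial F) (RatFunc F) (Polynomial.X - Polynomial.C (ζ ^ q)))⁻¹ := by
    simp only [T, ← map_pow, hXC]
  have hTσ : Tσ = (algebraMap (Polynomial F) (RatFunc F) (Polynomial.X - Polynomial.C ζ))⁻¹ := by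
    simp only [Tσ, hXC]
  have hfield1 : ∀ (u : RatFunc F) (M : ℕ), u ≠ 0 →
      u⁻¹ ^ (M + 1) - u⁻¹ = (1 - u ^ M) / u ^ (M + 1) := by
    intro u M hu
    rw [eq_div_iff (pow_ne_zero _ hu), sub_mul, ← mul_pow, inv_mul_cancel₀ hu, one_pow,
      pow_succ, ← mul_assoc, mul_right_comm, inv_mul_cancel₀ hu, one_mul]
  have hfield2 : ∀ (u v : RatFunc F) (M : ℕ), u ≠ 0 → v ≠ 0 →
      u⁻¹ ^ (M + 1) - v⁻¹ = (v - u ^ (M + 1)) / (u ^ (M + 1) * v) := by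
    intro u v M hu hv
    field_simp
    rw [one_div, sub_mul, mul_right_comm, ← mul_pow, inv_mul_cancel₀ hu, one_pow, one_mul, one_mul]
  -- the valuation statement
  have hval : ∀ k : ℕ, 1 ≤ k →
      ((br k).num.rootMultiplicity (ζ ^ q) : ℤ) -
        ((br k).denom.rootMultiplicity (ζ ^ q) : ℤ) = -(q ^ k : ℤ) := by
    intro k hk
    have hqk2 : 2 ≤ q ^ k := le_trans hq2 (Nat.le_self_pow (by omega) q)
    obtain ⟨M, hM1, hM⟩ : ∃ M, 1 ≤ M ∧ q ^ k = M + 1 := ⟨q ^ k - 1, by omega, by omega⟩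
    have hcast : ((M + 1 : ℕ) : ℤ) = (q : ℤ) ^ k := by
      rw [← hM]; push_cast; ring
    have hA : algebraMap (Polynomial F) (RatFunc F) (Polynomial.X - Polynomial.C (ζ ^ q)) ≠ 0 :=
      RatFunc.algebraMap_ne_zero (Polynomial.X_sub_C_ne_zero (ζ ^ q))
    have hB : algebraMap (Polynomial F) (RatFunc F) (Polynomial.X - Polynomial.C ζ) ≠ 0 :=
      RatFunc.algebraMap_ne_zero (Polynomial.X_sub_C_ne_zero ζ)
    rcases Nat.even_or_odd k with hpar | hpar
    · -- even case
      have hk2 : k % 2 = 0 := Nat.even_iff.mp hpar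
      have hrep : br k = algebraMap (Polynomial F) (RatFunc F)
            (1 - (Polynomial.X - Polynomial.C (ζ ^ q)) ^ M) /
          algebraMap (Polynomial F) (RatFunc F)
            ((Polynomial.X - Polynomial.C (ζ ^ q)) ^ (M + 1) * 1) := by
        show T ^ q ^ k - (if k % 2 = 0 then T else Tσ) = _
        rw [if_pos hk2, hT, hM, hfield1 _ M hA]
        simp only [map_mul, map_sub, map_pow, map_one, mul_one]
      have haux := aux_val (ζ ^ q) (1 - (Polynomial.X - Polynomial.C (ζ ^ q)) ^ M) 1 (M + 1)
        (by simp [zero_pow (by omega : M ≠ 0)]) (by simp)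
      rw [hrep, haux.2, hcast]
    · -- odd case
      have hk2 : ¬ (k % 2 = 0) := by
        have := Nat.odd_iff.mp hpar; omega
      have hζ' : ζ ^ q - ζ ≠ 0 := sub_ne_zero.mpr hζ
      have hrep : br k = algebraMap (Polynomial F) (RatFunc F)
            ((Polynomial.X - Polynomial.C ζ) - (Polynomial.X - Polynomial.C (ζ ^ q)) ^ (M + 1)) /
          algebraMap (Polynomial F) (RatFunc F)
            ((Polynomial.X - Polynomial.C (ζ ^ q)) ^ (M + 1) * (Polynomial.X - Polynomial.C ζ)) := by
        show T ^ q ^ k - (if k % 2 = 0 then T else Tσ) = _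
        rw [if_neg hk2, hT, hTσ, hM, hfield2 _ _ M hA hB]
        simp only [map_mul, map_sub, map_pow, map_one, mul_one]
      have haux := aux_val (ζ ^ q)
        ((Polynomial.X - Polynomial.C ζ) - (Polynomial.X - Polynomial.C (ζ ^ q)) ^ (M + 1))
        (Polynomial.X - Polynomial.C ζ) (M + 1)
        (by simpa [zero_pow (by omega : M + 1 ≠ 0)] using hζ')
        (by simpa using hζ')
      rw [hrep, haux.2, hcast]
  -- nonvanishing
  have hne : ∀ k : ℕ, 1 ≤ k → br k ≠ 0 := by
    intro k hk h0
    have h := hval k hk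
    rw [h0] at h
    simp only [RatFunc.num_zero, RatFunc.denom_zero, Polynomial.rootMultiplicity_zero] at h
    rw [Polynomial.rootMultiplicity_eq_zero (by simp [Polynomial.IsRoot])] at h
    have hpos : (0 : ℤ) < (q : ℤ) ^ k := by positivity
    simp at h
    omega
  -- Frobenius on brackets
  have heven : ∀ m : ℕ, br 2 ^ q ^ (2 * m) = br (2 * m + 2) - br (2 * m) := by
    intro m
    have e1 : (2 * m + 2) % 2 = 0 := by omega
    have e0 : (2 * m) % 2 = 0 := by omega
    simp only [br]
    rw [if_pos e1, if_pos e0, if_true, hfrob, ← pow_mul, ← pow_add,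
      Nat.add_comm 2 (2 * m)]
    ring
  have hodd : ∀ m : ℕ, br 2 ^ q ^ (2 * m + 1) = br (2 * m + 3) - br (2 * m + 1) := by
    intro m
    have e1 : ¬ ((2 * m + 3) % 2 = 0) := by omega
    have e0 : ¬ ((2 * m + 1) % 2 = 0) := by omega
    simp only [br]
    rw [if_neg e1, if_neg e0, if_true, hfrob, ← pow_mul, ← pow_add,
      show 2 + (2 * m + 1) = 2 * m + 3 by omega]
    ring
  -- geometric sums
  have hEsum : ∀ m : ℕ, (q ^ (2 * m) - 1) / (q ^ 2 - 1) = ∑ i ∈ Finset.range m, q ^ (2 * i) := by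
    intro m
    rw [pow_mul, ← Nat.geomSum_eq (by have := Nat.le_self_pow (by omega : (2:ℕ) ≠ 0) q; omega : 2 ≤ q ^ 2) m]
    exact Finset.sum_congr rfl fun i _ => (pow_mul q 2 i).symm
  have hβexp : (q ^ (2 * d + 1) - q) / (q ^ 2 - 1) = ∑ i ∈ Finset.range d, q ^ (2 * i + 1) := by
    obtain ⟨c0, hc0⟩ : (q ^ 2 - 1) ∣ (q ^ (2 * d) - 1) := by
      rw [pow_mul]
      simpa using Nat.sub_dvd_pow_sub_pow (q ^ 2) 1 d
    have hq21 : 0 < q ^ 2 - 1 := by have := Nat.le_self_pow (by omega : (2:ℕ) ≠ 0) q; omega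
    have h1 : q ^ (2 * d + 1) - q = (q ^ (2 * d) - 1) * q := by
      rw [Nat.sub_mul, one_mul, pow_succ]
    have h4 : ∑ i ∈ Finset.range d, q ^ (2 * i + 1) = (∑ i ∈ Finset.range d, q ^ (2 * i)) * q := by
      rw [Finset.sum_mul]
      exact Finset.sum_congr rfl fun i _ => pow_succ q (2 * i)
    rw [h1, hc0, mul_assoc, Nat.mul_div_cancel_left _ hq21, h4, ← hEsum d, hc0,
      Nat.mul_div_cancel_left _ hq21]
  -- telescoping products
  have key1 : ∀ m : ℕ, 1 ≤ m →
      (∏ j ∈ Finset.Icc 2 m, (1 - br (2 * (j - 1)) / br (2 * j))) * ∏ j ∈ Finset.Icc 1 m, br (2 * j)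
        = br 2 ^ (∑ i ∈ Finset.range m, q ^ (2 * i)) := by
    intro m hm
    induction m with
    | zero => omega
    | succ m ih =>
      rcases Nat.lt_or_ge m 1 with hm1 | hm1
      · interval_cases m
        rw [show Finset.Icc 2 1 = ∅ from rfl, Finset.prod_empty, one_mul,
          Finset.Icc_self, Finset.prod_singleton, Finset.sum_range_one]
        norm_num
      · have ih' := ih hm1
        rw [Finset.prod_Icc_succ_top (by omega : 2 ≤ m + 1),
            Finset.prod_Icc_succ_top (by omega : 1 ≤ m + 1),
            Finset.sum_range_succ, pow_add, mul_mul_mul_comm, ih']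
        congr 1
        have hnz := hne (2 * (m + 1)) (by omega)
        rw [show (m + 1) - 1 = m by omega, show 2 * (m + 1) = 2 * m + 2 by ring]
        rw [show 2 * (m + 1) = 2 * m + 2 by ring] at hnz
        rw [heven m]
        field_simp
  have key2 : ∀ m : ℕ, 1 ≤ m →
      (∏ j ∈ Finset.Icc 1 m, (1 - br (2 * j - 1) / br (2 * j + 1))) *
          ∏ j ∈ Finset.Icc 0 m, br (2 * j + 1)
        = br 1 * br 2 ^ (∑ i ∈ Finset.range m, q ^ (2 * i + 1)) := by
    intro m hm
    induction m with
    | zero => omega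
    | succ m ih =>
      rcases Nat.lt_or_ge m 1 with hm1 | hm1
      · interval_cases m
        rw [Finset.Icc_self, Finset.prod_singleton,
          show Finset.Icc (0:ℕ) 1 = {0, 1} from rfl,
          Finset.prod_insert (by decide), Finset.prod_singleton, Finset.sum_range_one]
        have h1 := hne 1 (by omega)
        have h3 := hne 3 (by omega)
        have := hodd 0
        norm_num at this ⊢
        rw [this]
        field_simp
      · have ih' := ih hm1
        rw [Finset.prod_Icc_succ_top (by omega : 1 ≤ m + 1),
            Finset.prod_Icc_succ_top (by omega : 0 ≤ m + 1),
            Finset.sum_range_succ, pow_add, mul_mul_mul_comm, ih', mul_assoc]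
        congr 1
        have hnz := hne (2 * (m + 1) + 1) (by omega)
        rw [show 2 * (m + 1) + 1 = 2 * m + 3 by ring] at hnz ⊢
        rw [show 2 * (m + 1) - 1 = 2 * m + 1 by omega, hodd m]
        rw [sub_mul, one_mul, div_mul_cancel₀ _ hnz]
  refine ⟨?_, ?_, hval⟩
  · rw [eq_div_iff (Finset.prod_ne_zero_iff.mpr fun j hj =>
      hne (2 * j) (by have := (Finset.mem_Icc.mp hj).1; omega)), hEsum d]
    exact key1 d hd
  · rw [eq_div_iff (Finset.prod_ne_zero_iff.mpr fun j hj => hne (2 * j + 1) (by omega)), hβexp]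
    exact key2 d hd
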